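/- Let $x_1, \dots, x_{10}$ be real numbers with $\sum_i x_i = 0$. Then $3\sum_i x_i^3 \le \frac{8}{\sqrt{10}}\left(\sum_i x_i^2\right)^{3/2}$. -/

import Mathlib

open Finset

theorem stmt_15 (x : Fin 10 → ℝ) (hsum : ∑ i, x i = 0) :
    3 * ∑ i, (x i) ^ 3 ≤ (8 / Real.sqrt 10) * Real.sqrt (∑ i, (x i) ^ 2) ^ 3 := by
  set Q : ℝ := ∑ i, (x i) ^ 2 with hQdef
  have hQ0 : 0 ≤ Q := Finset.sum_nonneg fun i _ => sq_nonneg _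
  set s : ℝ := Real.sqrt Q with hsdef
  have hs0 : 0 ≤ s := Real.sqrt_nonneg _
  have hsq : s ^ 2 = Q := Real.sq_sqrt hQ0
  set r : ℝ := Real.sqrt 10 with hrdef
  have hr0 : (0:ℝ) < r := Real.sqrt_pos.mpr (by norm_num)
  have hrsq : r ^ 2 = 10 := Real.sq_sqrt (by norm_num)
  set M : ℝ := 3 * s / r with hMdef
  set m : ℝ := s / (3 * r) with hmdef
  have hM0 : 0 ≤ M := by positivity
  have hM2 : M ^ 2 = 9 / 10 * Q := by
    rw [hMdef, div_pow, hrsq, show (3 * s) ^ 2 = 9 * s ^ 2 by ring, hsq]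
    ring
  have hxM : ∀ i, x i ≤ M := by
    intro i
    have h1 : ∑ j ∈ univ.erase i, x j = - x i := by
      have h := Finset.add_sum_erase univ x (Finset.mem_univ i)
      rw [hsum] at h; linarith
    have h2 : ∑ j ∈ univ.erase i, (x j) ^ 2 = Q - (x i) ^ 2 := by
      have h := Finset.add_sum_erase univ (fun j => (x j) ^ 2) (Finset.mem_univ i)
      linarith
    have hcard : (univ.erase i).card = 9 := by
      rw [Finset.card_erase_of_mem (Finset.mem_univ i)]; simp
    have hcs := sq_sum_le_card_mul_sum_sq (s := univ.erase i) (f := x)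
    rw [h1, h2, hcard, neg_sq] at hcs
    have hx2 : (x i) ^ 2 ≤ M ^ 2 := by
      rw [hM2]
      push_cast at hcs
      linarith
    calc x i ≤ |x i| := le_abs_self _
      _ = Real.sqrt ((x i) ^ 2) := (Real.sqrt_sq_eq_abs _).symm
      _ ≤ Real.sqrt (M ^ 2) := Real.sqrt_le_sqrt hx2
      _ = M := Real.sqrt_sq hM0
  have hpt : ∑ i, (x i - M) * (x i + m) ^ 2 ≤ 0 :=
    Finset.sum_nonpos fun i _ =>
      mul_nonpos_of_nonpos_of_nonneg (by linarith [hxM i]) (sq_nonneg _)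
  have key : ∑ i, (x i - M) * (x i + m) ^ 2 =
      (∑ i, (x i) ^ 3) + (2 * m - M) * (∑ i, (x i) ^ 2)
        + (m ^ 2 - 2 * M * m) * (∑ i, x i) - 10 * (M * m ^ 2) := by
    rw [Finset.mul_sum, Finset.mul_sum, ← Finset.sum_add_distrib, ← Finset.sum_add_distrib,
      show (10 : ℝ) * (M * m ^ 2) = ∑ _i : Fin 10, M * m ^ 2 by simp,
      ← Finset.sum_sub_distrib]
    exact Finset.sum_congr rfl fun i _ => by ring
  rw [key, hsum, ← hQdef] at hpt
  have hsum3 : ∑ i, (x i) ^ 3 ≤ (M - 2 * m) * Q + 10 * (M * m ^ 2) := by linarith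
  have hfin : 3 * ((M - 2 * m) * Q + 10 * (M * m ^ 2)) = 8 / r * s ^ 3 := by
    rw [hMdef, hmdef, ← hsq]
    field_simp
    ring_nf
    linear_combination (-s ^ 3) * hrsq
  calc 3 * ∑ i, (x i) ^ 3 ≤ 3 * ((M - 2 * m) * Q + 10 * (M * m ^ 2)) := by linarith
    _ = 8 / r * s ^ 3 := hfin
    _ = (8 / Real.sqrt 10) * Real.sqrt Q ^ 3 := by rw [← hrdef, ← hsdef]
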